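/- Let Γ be a countable group, k,n ∈ ℕ, and A ∈ M_{n,k}(ℤ[Γ]). If the linear map C₀(Γ)^k → C₀(Γ)^n sending g to gA* is injective, then the map Δ(X_A) → ℤ[Γ]^n/ℤ[Γ]^k A* sending a homoclinic point x to the class of x̃A*, where x̃ ∈ C₀(Γ)^k is any lift of x, is a well-defined injective Γ-equivariant group homomorphism. -/

import Mathlib

open Filter Topology

/-- Convolution: `(f * g)(γ) = ∑ δ, f (γ δ⁻¹) g δ`. -/
noncomputable def conv {Γ : Type*} [Group Γ] (f g : Γ → ℝ) : Γ → ℝ :=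
  fun γ => ∑' δ : Γ, f (γ * δ⁻¹) * g δ

/-- The involution `f ↦ f*`, `(f*)(γ) = f(γ⁻¹)`. -/
def starFn {Γ : Type*} [Group Γ] (f : Γ → ℝ) : Γ → ℝ := fun γ => f γ⁻¹

/-- The shift action of `Γ`: `(γ • u)(γ') = u (γ⁻¹ γ')`. -/
def shift {Γ A : Type*} [Group Γ] (γ : Γ) (u : Γ → A) : Γ → A :=
  fun γ' => u (γ⁻¹ * γ')

/-- `h` belongs to `ℤ[Γ]`: integer-valued with finite support. -/
def InZG {Γ : Type*} (h : Γ → ℝ) : Prop :=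
  (∀ γ, ∃ m : ℤ, h γ = (m : ℝ)) ∧ (Function.support h).Finite

variable {Γ : Type*} [Group Γ] {n k : ℕ}

/-- For `A ∈ M_{n,k}(ℤ[Γ])` and `g ∈ (·)^k`, the product `g A*`:
`(g A*)^j = ∑_i g^i (a^{ji})*`. -/
noncomputable def mulAstar (A : Fin n → Fin k → Γ → ℝ) (g : Fin k → Γ → ℝ) :
    Fin n → Γ → ℝ :=
  fun j γ => ∑ i : Fin k, conv (g i) (starFn (A j i)) γ

/-- Two elements of `ℤ[Γ]^n` represent the same class modulo `ℤ[Γ]^k A*`. -/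
def RelModA (A : Fin n → Fin k → Γ → ℝ) (a b : Fin n → Γ → ℝ) : Prop :=
  ∃ h : Fin k → Γ → ℝ, (∀ i, InZG (h i)) ∧ a - b = mulAstar A h

/-- `g` is a `C₀`-lift of the configuration `x ∈ (𝕋^k)^Γ`. -/
def IsLift (x : Fin k → Γ → AddCircle (1 : ℝ)) (g : Fin k → Γ → ℝ) : Prop :=
  (∀ i, Tendsto (g i) cofinite (𝓝 (0 : ℝ))) ∧
  (∀ i γ, ((g i γ : ℝ) : AddCircle (1 : ℝ)) = x i γ)

/-- `x` is a homoclinic point of the group subshift `X_A`: it lies in `X_A`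
(some bounded lift `g` has `g A*` integer-valued) and is homoclinic to `0`. -/
def HomXA (A : Fin n → Fin k → Γ → ℝ) (x : Fin k → Γ → AddCircle (1 : ℝ)) : Prop :=
  (∃ g : Fin k → Γ → ℝ, (∀ i, ∃ C : ℝ, ∀ γ, |g i γ| ≤ C) ∧
      (∀ i γ, ((g i γ : ℝ) : AddCircle (1 : ℝ)) = x i γ) ∧
      (∀ j γ, ∃ m : ℤ, mulAstar A g j γ = (m : ℝ))) ∧
  (∀ i, Tendsto (x i) cofinite (𝓝 (0 : AddCircle (1 : ℝ))))

section Aux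

set_option linter.unusedSectionVars false

lemma sum_int' {α : Type*} {s : Finset α} {f : α → ℝ} (h : ∀ a ∈ s, ∃ m : ℤ, f a = m) :
    ∃ m : ℤ, ∑ a ∈ s, f a = m := by
  classical
  induction s using Finset.induction with
  | empty => exact ⟨0, by simp⟩
  | @insert a s ha ih =>
    obtain ⟨m, hm⟩ := h a (Finset.mem_insert_self a s)
    obtain ⟨M, hM⟩ := ih fun b hb => h b (Finset.mem_insert_of_mem hb)
    exact ⟨m + M, by rw [Finset.sum_insert ha, hm, hM]; push_cast; ring⟩

lemma conv_eq_sum (f b : Γ → ℝ) (hb : (Function.support b).Finite) (γ : Γ) :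
    conv f b γ = ∑ δ ∈ hb.toFinset, f (γ * δ⁻¹) * b δ := by
  refine tsum_eq_sum fun δ hδ => ?_
  have : b δ = 0 := by by_contra h; exact hδ (hb.mem_toFinset.mpr h)
  simp [this]

lemma starFn_support_finite (b : Γ → ℝ) (hb : (Function.support b).Finite) :
    (Function.support (starFn b)).Finite := by
  have : Function.support (starFn b) = (fun γ : Γ => γ⁻¹) ⁻¹' Function.support b := rfl
  rw [this]
  exact Set.Finite.preimage (Set.injOn_of_injective inv_injective) hb

lemma sub_int_of_coe_eq {a b : ℝ} (h : ((a : ℝ) : AddCircle (1:ℝ)) = b) :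
    ∃ m : ℤ, a - b = m := by
  obtain ⟨m, hm⟩ := QuotientAddGroup.eq.mp h
  refine ⟨-m, ?_⟩
  simp only [zsmul_eq_mul, mul_one] at hm
  push_cast
  linarith

lemma coe_eq_of_sub_int {a b : ℝ} (m : ℤ) (h : a - b = m) :
    ((a : ℝ) : AddCircle (1:ℝ)) = b := by
  refine QuotientAddGroup.eq.mpr ⟨-m, ?_⟩
  simp only [zsmul_eq_mul, mul_one]
  push_cast
  linarith

lemma conv_c0 (f b : Γ → ℝ) (hb : (Function.support b).Finite)
    (hf : Tendsto f cofinite (𝓝 0)) : Tendsto (conv f b) cofinite (𝓝 (0:ℝ)) := by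
  have key : ∀ δ : Γ, Tendsto (fun γ => f (γ * δ⁻¹) * b δ) cofinite (𝓝 (0:ℝ)) := by
    intro δ
    have hmap : Tendsto (fun γ : Γ => γ * δ⁻¹) cofinite cofinite :=
      (mul_left_injective δ⁻¹).tendsto_cofinite
    simpa using (hf.comp hmap).mul_const (b δ)
  have hs := tendsto_finset_sum hb.toFinset (fun δ _ => key δ)
  simp only [Finset.sum_const_zero] at hs
  exact hs.congr fun γ => (conv_eq_sum f b hb γ).symm

lemma conv_int (f b : Γ → ℝ) (hb : (Function.support b).Finite)
    (hf : ∀ γ, ∃ m : ℤ, f γ = m) (hbz : ∀ γ, ∃ m : ℤ, b γ = m) (γ : Γ) :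
    ∃ m : ℤ, conv f b γ = m := by
  rw [conv_eq_sum f b hb]
  refine sum_int' fun δ _ => ?_
  obtain ⟨m, hm⟩ := hf (γ * δ⁻¹)
  obtain ⟨M, hM⟩ := hbz δ
  exact ⟨m * M, by rw [hm, hM]; push_cast; ring⟩

lemma conv_sub_left (f f' b : Γ → ℝ) (hb : (Function.support b).Finite) (γ : Γ) :
    conv (f - f') b γ = conv f b γ - conv f' b γ := by
  rw [conv_eq_sum f b hb, conv_eq_sum f' b hb, conv_eq_sum (f - f') b hb,
      ← Finset.sum_sub_distrib]
  exact Finset.sum_congr rfl fun δ _ => by simp [Pi.sub_apply]; ring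

lemma conv_add_left (f f' b : Γ → ℝ) (hb : (Function.support b).Finite) (γ : Γ) :
    conv (f + f') b γ = conv f b γ + conv f' b γ := by
  rw [conv_eq_sum f b hb, conv_eq_sum f' b hb, conv_eq_sum (f + f') b hb,
      ← Finset.sum_add_distrib]
  exact Finset.sum_congr rfl fun δ _ => by simp [Pi.add_apply]; ring

lemma conv_zero_left (b : Γ → ℝ) (γ : Γ) : conv (0 : Γ → ℝ) b γ = 0 := by
  simp [conv]

lemma conv_shift (γ₀ : Γ) (f b : Γ → ℝ) (γ : Γ) :
    conv (shift γ₀ f) b γ = conv f b (γ₀⁻¹ * γ) := by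
  unfold conv shift
  exact tsum_congr fun δ => by rw [mul_assoc]

lemma inZG_of_int_c0 (f : Γ → ℝ) (hf : ∀ γ, ∃ m : ℤ, f γ = m)
    (hc : Tendsto f cofinite (𝓝 0)) : InZG f := by
  refine ⟨hf, ?_⟩
  have h1 : {γ | ¬ dist (f γ) 0 < 1}.Finite :=
    eventually_cofinite.mp (Metric.tendsto_nhds.mp hc 1 one_pos)
  refine h1.subset fun γ hγ => ?_
  obtain ⟨m, hm⟩ := hf γ
  have hm0 : m ≠ 0 := by rintro rfl; exact hγ (by simpa using hm)
  simp only [Set.mem_setOf_eq, Real.dist_eq, sub_zero, not_lt, hm]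
  exact_mod_cast Int.one_le_abs hm0

lemma c0_of_finite (f : Γ → ℝ) (hf : (Function.support f).Finite) :
    Tendsto f cofinite (𝓝 (0:ℝ)) := by
  have h : ∀ᶠ γ in cofinite, f γ = 0 := by
    rw [eventually_cofinite]
    simpa [Function.support] using hf
  exact Tendsto.congr' (by filter_upwards [h] with γ hγ using hγ.symm) tendsto_const_nhds

variable {A : Fin n → Fin k → Γ → ℝ}

lemma mulAstar_sub (hA : ∀ j i, (Function.support (starFn (A j i))).Finite)
    (g g' : Fin k → Γ → ℝ) : mulAstar A (g - g') = mulAstar A g - mulAstar A g' := by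
  funext j γ
  simp only [mulAstar, Pi.sub_apply, ← Finset.sum_sub_distrib]
  exact Finset.sum_congr rfl fun i _ => conv_sub_left (g i) (g' i) _ (hA j i) γ

lemma mulAstar_add (hA : ∀ j i, (Function.support (starFn (A j i))).Finite)
    (g g' : Fin k → Γ → ℝ) : mulAstar A (g + g') = mulAstar A g + mulAstar A g' := by
  funext j γ
  simp only [mulAstar, Pi.add_apply, ← Finset.sum_add_distrib]
  exact Finset.sum_congr rfl fun i _ => conv_add_left (g i) (g' i) _ (hA j i) γ

lemma mulAstar_zero : mulAstar A (0 : Fin k → Γ → ℝ) = 0 := by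
  funext j γ
  simp only [mulAstar, Pi.zero_apply]
  exact Finset.sum_eq_zero fun i _ => conv_zero_left _ γ

lemma mulAstar_int (hA : ∀ j i, (Function.support (starFn (A j i))).Finite)
    (hAz : ∀ j i γ, ∃ m : ℤ, starFn (A j i) γ = m)
    (g : Fin k → Γ → ℝ) (hg : ∀ i γ, ∃ m : ℤ, g i γ = m) (j : Fin n) (γ : Γ) :
    ∃ m : ℤ, mulAstar A g j γ = m := by
  simp only [mulAstar]
  exact sum_int' fun i _ => conv_int (g i) _ (hA j i) (hg i) (hAz j i) γ

lemma mulAstar_c0 (hA : ∀ j i, (Function.support (starFn (A j i))).Finite)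
    (g : Fin k → Γ → ℝ) (hg : ∀ i, Tendsto (g i) cofinite (𝓝 (0:ℝ))) (j : Fin n) :
    Tendsto (mulAstar A g j) cofinite (𝓝 (0:ℝ)) := by
  have hs := tendsto_finset_sum (Finset.univ : Finset (Fin k))
    (fun i _ => conv_c0 (g i) (starFn (A j i)) (hA j i) (hg i))
  simp only [Finset.sum_const_zero] at hs
  exact hs

lemma mulAstar_shift (γ₀ : Γ) (g : Fin k → Γ → ℝ) :
    mulAstar A (fun i => shift γ₀ (g i)) = fun j => shift γ₀ (mulAstar A g j) := by
  funext j γ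
  simp only [mulAstar, shift]
  exact Finset.sum_congr rfl fun i _ => conv_shift γ₀ (g i) _ γ

end Aux

/-- If the map `C₀(Γ)^k → C₀(Γ)^n`, `g ↦ g A*`, is injective, then
`x ↦ [x̃ A*] ∈ ℤ[Γ]^n / ℤ[Γ]^k A*` (for any `C₀`-lift `x̃` of the homoclinic point
`x ∈ Δ(X_A)`) is a well-defined, injective, `Γ`-equivariant group homomorphism. -/
theorem homoclinic_embedding (Γ : Type*) [Group Γ] [Countable Γ] (n k : ℕ)
    (A : Fin n → Fin k → Γ → ℝ) (hA : ∀ j i, InZG (A j i))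
    (hinj : ∀ g : Fin k → Γ → ℝ, (∀ i, Tendsto (g i) cofinite (𝓝 (0 : ℝ))) →
      mulAstar A g = 0 → g = 0) :
    -- takes values in ℤ[Γ]^n
    (∀ (x : Fin k → Γ → AddCircle (1 : ℝ)), HomXA A x →
      ∀ g, IsLift x g → ∀ j, InZG (mulAstar A g j)) ∧
    -- well-defined (independent of the chosen lift)
    (∀ (x : Fin k → Γ → AddCircle (1 : ℝ)), HomXA A x →
      ∀ g g', IsLift x g → IsLift x g' →
        RelModA A (mulAstar A g) (mulAstar A g')) ∧
    -- group homomorphism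
    (∀ (x y : Fin k → Γ → AddCircle (1 : ℝ)), HomXA A x → HomXA A y →
      ∀ gx gy gz, IsLift x gx → IsLift y gy → IsLift (x + y) gz →
        RelModA A (mulAstar A gz) (mulAstar A gx + mulAstar A gy)) ∧
    -- injective
    (∀ (x y : Fin k → Γ → AddCircle (1 : ℝ)), HomXA A x → HomXA A y →
      ∀ gx gy, IsLift x gx → IsLift y gy →
        RelModA A (mulAstar A gx) (mulAstar A gy) → x = y) ∧
    -- Γ-equivariant
    (∀ (x : Fin k → Γ → AddCircle (1 : ℝ)), HomXA A x →
      ∀ gx, IsLift x gx → ∀ γ₀ : Γ,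
        IsLift (fun i => shift γ₀ (x i)) (fun i => shift γ₀ (gx i)) ∧
        RelModA A (mulAstar A (fun i => shift γ₀ (gx i)))
          (fun j => shift γ₀ (mulAstar A gx j))) := by
  have hAfin : ∀ j i, (Function.support (starFn (A j i))).Finite :=
    fun j i => starFn_support_finite _ (hA j i).2
  have hAz : ∀ j i γ, ∃ m : ℤ, starFn (A j i) γ = m := fun j i γ => (hA j i).1 γ⁻¹
  -- difference of two lifts of the same point is in ℤ[Γ]^k
  have diffZ : ∀ (x : Fin k → Γ → AddCircle (1:ℝ)) (g g' : Fin k → Γ → ℝ),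
      IsLift x g → IsLift x g' → ∀ i, InZG ((g - g') i) := by
    intro x g g' hg hg' i
    refine inZG_of_int_c0 _ (fun γ => ?_) ?_
    · exact sub_int_of_coe_eq ((hg.2 i γ).trans (hg'.2 i γ).symm)
    · have := (hg.1 i).sub (hg'.1 i)
      simp only [sub_zero, add_zero] at this; exact this
  refine ⟨?_, ?_, ?_, ?_, ?_⟩
  · -- values in ℤ[Γ]^n
    rintro x ⟨⟨g₀, _, hg₀lift, hg₀int⟩, _⟩ g hg j
    refine inZG_of_int_c0 _ (fun γ => ?_) (mulAstar_c0 hAfin g hg.1 j)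
    have hd : ∀ i γ', ∃ m : ℤ, (g - g₀) i γ' = m := by
      intro i γ'
      exact sub_int_of_coe_eq ((hg.2 i γ').trans (hg₀lift i γ').symm)
    obtain ⟨m, hm⟩ := mulAstar_int hAfin hAz (g - g₀) hd j γ
    obtain ⟨M, hM⟩ := hg₀int j γ
    have heq : mulAstar A g j γ = mulAstar A g₀ j γ + mulAstar A (g - g₀) j γ := by
      have := congrFun (congrFun (mulAstar_sub hAfin g g₀) j) γ
      simp only [Pi.sub_apply] at this
      linarith
    exact ⟨M + m, by rw [heq, hm, hM]; push_cast; ring⟩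
  · -- well-defined
    intro x _ g g' hg hg'
    exact ⟨g - g', diffZ x g g' hg hg', (mulAstar_sub hAfin g g').symm⟩
  · -- group homomorphism
    intro x y _ _ gx gy gz hgx hgy hgz
    have hsum : IsLift (x + y) (gx + gy) := by
      constructor
      · intro i
        have := (hgx.1 i).add (hgy.1 i)
        simp only [sub_zero, add_zero] at this; exact this
      · intro i γ
        have : ((gx i γ + gy i γ : ℝ) : AddCircle (1:ℝ)) =
            ((gx i γ : ℝ) : AddCircle (1:ℝ)) + ((gy i γ : ℝ) : AddCircle (1:ℝ)) := by
          rfl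
        simp only [Pi.add_apply, this, hgx.2 i γ, hgy.2 i γ]
    refine ⟨gz - (gx + gy), diffZ (x + y) gz (gx + gy) hgz hsum, ?_⟩
    rw [mulAstar_sub hAfin gz (gx + gy), mulAstar_add hAfin gx gy]
  · -- injective
    rintro x y _ _ gx gy hgx hgy ⟨h, hh, heq⟩
    have hzero : mulAstar A (gx - gy - h) = 0 := by
      rw [mulAstar_sub hAfin (gx - gy) h, mulAstar_sub hAfin gx gy, ← heq]
      simp
    have hc0 : ∀ i, Tendsto ((gx - gy - h) i) cofinite (𝓝 (0:ℝ)) := by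
      intro i
      have h1 := (hgx.1 i).sub (hgy.1 i)
      have h2 := c0_of_finite (h i) (hh i).2
      have := h1.sub h2
      simp only [sub_zero, add_zero] at this; exact this
    have hzero' := hinj _ hc0 hzero
    funext i γ
    have hval : gx i γ - gy i γ - h i γ = 0 := by
      have := congrFun (congrFun hzero' i) γ
      simpa using this
    obtain ⟨m, hm⟩ := (hh i).1 γ
    have : ((gx i γ : ℝ) : AddCircle (1:ℝ)) = gy i γ :=
      coe_eq_of_sub_int m (by linarith)
    rw [← hgx.2 i γ, this, hgy.2 i γ]
  · -- equivariance
    intro x _ gx hgx γ₀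
    constructor
    · constructor
      · intro i
        have hmap : Tendsto (fun γ' : Γ => γ₀⁻¹ * γ') cofinite cofinite :=
          (mul_right_injective γ₀⁻¹).tendsto_cofinite
        exact (hgx.1 i).comp hmap
      · intro i γ
        exact hgx.2 i (γ₀⁻¹ * γ)
    · refine ⟨0, fun i => ⟨fun γ => ⟨0, by simp⟩, by simp⟩, ?_⟩
      rw [mulAstar_shift γ₀ gx, mulAstar_zero]
      simp
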